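/- Let H₁, H₂ be nonzero complex Hilbert spaces and let T ∈ B(H₂, H₁) with ‖T‖ ≤ 1. The Hilbert T₂-module H₁ ⊕ H₂ given by π_{(H₁,H₂,T)} is a semigenerator if and only if the range T(H₂) is not dense in H₁. -/

import Mathlib

set_option synthInstance.maxHeartbeats 1000000
set_option maxHeartbeats 2000000

noncomputable section

open Filter

open scoped ENNReal Matrix.Norms.L2Operator

variable (A : Type) [NonUnitalNormedRing A] [NormedSpace ℂ A]

/-- A Hilbert `A`-module structure on the Hilbert space `K`: a contractive algebra
homomorphism `π : A → B(K)` which is nondegenerate, i.e. the linear span of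
`{π a x : a ∈ A, x ∈ K}` is dense in `K`. -/
def IsHilbertRep {K : Type} [NormedAddCommGroup K] [InnerProductSpace ℂ K] [CompleteSpace K]
    (π : A →ₙₐ[ℂ] (K →L[ℂ] K)) : Prop :=
  (∀ a : A, ‖π a‖ ≤ ‖a‖) ∧
  Dense ((Submodule.span ℂ {x : K | ∃ (a : A) (y : K), π a y = x} : Submodule ℂ K) : Set K)

/-- A bounded `A`-module map between Hilbert `A`-modules. -/
def IsModuleMap {K L : Type} [NormedAddCommGroup K] [InnerProductSpace ℂ K]
    [NormedAddCommGroup L] [InnerProductSpace ℂ L]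
    (πK : A →ₙₐ[ℂ] (K →L[ℂ] K)) (πL : A →ₙₐ[ℂ] (L →L[ℂ] L)) (T : K →L[ℂ] L) : Prop :=
  ∀ (a : A) (x : K), T (πK a x) = πL a (T x)

/-- `H` is a semigenerator: for every nonzero Hilbert `A`-module `K` there is a nonzero
bounded `A`-module map `H → K`. -/
def IsSemigenerator {H : Type} [NormedAddCommGroup H] [InnerProductSpace ℂ H] [CompleteSpace H]
    (πH : A →ₙₐ[ℂ] (H →L[ℂ] H)) : Prop :=
  ∀ (K : Type) [NormedAddCommGroup K] [InnerProductSpace ℂ K] [CompleteSpace K],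
    ∀ (πK : A →ₙₐ[ℂ] (K →L[ℂ] K)), IsHilbertRep A πK → Nontrivial K →
      ∃ V : H →L[ℂ] K, IsModuleMap A πH πK V ∧ V ≠ 0

/-- The algebra of upper triangular `2 × 2` complex matrices, normed as operators
on the Euclidean space `ℂ²` (the `L²` operator norm). -/
def T2 : Subalgebra ℂ (Matrix (Fin 2) (Fin 2) ℂ) where
  carrier := {M | M 1 0 = 0}
  mul_mem' := by
    intro a b ha hb
    simp only [Set.mem_setOf_eq] at *
    simp [Matrix.mul_apply, Fin.sum_univ_two, ha, hb]
  add_mem' := by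
    intro a b ha hb
    simp only [Set.mem_setOf_eq] at *
    simp [ha, hb]
  algebraMap_mem' := by
    intro c
    simp [Matrix.algebraMap_eq_diagonal]

/-- The operator `(ζ, η) ↦ (a • ζ + b • (T η), c • η)` on `H₁ × H₂`. -/
def blockOp {H₁ H₂ : Type} [NormedAddCommGroup H₁] [InnerProductSpace ℂ H₁]
    [NormedAddCommGroup H₂] [InnerProductSpace ℂ H₂]
    (T : H₂ →L[ℂ] H₁) (a b c : ℂ) : (H₁ × H₂) →L[ℂ] (H₁ × H₂) :=
  (a • ContinuousLinearMap.fst ℂ H₁ H₂ +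
    b • T.comp (ContinuousLinearMap.snd ℂ H₁ H₂)).prod
    (c • ContinuousLinearMap.snd ℂ H₁ H₂)

variable {H₁ H₂ : Type} [NormedAddCommGroup H₁] [InnerProductSpace ℂ H₁]
  [NormedAddCommGroup H₂] [InnerProductSpace ℂ H₂]

theorem blockOp_apply (T : H₂ →L[ℂ] H₁) (a b c : ℂ) (x : H₁ × H₂) :
    blockOp T a b c x = (a • x.1 + b • T x.2, c • x.2) := rfl

theorem blockOp_mul (T : H₂ →L[ℂ] H₁) (a b c a' b' c' : ℂ) :
    (blockOp T a b c).comp (blockOp T a' b' c') =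
      blockOp T (a * a') (a * b' + b * c') (c * c') := by
  refine ContinuousLinearMap.ext fun x => Prod.ext ?_ ?_
  · simp [blockOp_apply, smul_smul, smul_add, add_smul]
    abel
  · simp [blockOp_apply, smul_smul]

theorem blockOp_add (T : H₂ →L[ℂ] H₁) (a b c a' b' c' : ℂ) :
    blockOp T (a + a') (b + b') (c + c') = blockOp T a b c + blockOp T a' b' c' := by
  refine ContinuousLinearMap.ext fun x => Prod.ext ?_ ?_
  · simp [blockOp_apply, add_smul]
    abel
  · simp [blockOp_apply, add_smul]

theorem blockOp_smul (T : H₂ →L[ℂ] H₁) (s a b c : ℂ) :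
    blockOp T (s * a) (s * b) (s * c) = s • blockOp T a b c := by
  refine ContinuousLinearMap.ext fun x => Prod.ext ?_ ?_
  · simp [blockOp_apply, smul_smul, smul_add]
  · simp [blockOp_apply, smul_smul]

theorem blockOp_zero (T : H₂ →L[ℂ] H₁) : blockOp T 0 0 0 = 0 := by
  refine ContinuousLinearMap.ext fun x => Prod.ext ?_ ?_ <;> simp [blockOp_apply]

/-- Conjugation of an operator on `H₁ × H₂` to the `L²`-direct sum `WithLp 2 (H₁ × H₂)`. -/
def prodL2Conj (X : (H₁ × H₂) →L[ℂ] (H₁ × H₂)) :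
    WithLp 2 (H₁ × H₂) →L[ℂ] WithLp 2 (H₁ × H₂) :=
  ((WithLp.prodContinuousLinearEquiv 2 ℂ H₁ H₂).symm.toContinuousLinearMap.comp X).comp
    (WithLp.prodContinuousLinearEquiv 2 ℂ H₁ H₂).toContinuousLinearMap

theorem prodL2Conj_add (X Y : (H₁ × H₂) →L[ℂ] (H₁ × H₂)) :
    prodL2Conj (X + Y) = prodL2Conj X + prodL2Conj Y := by
  unfold prodL2Conj
  rw [ContinuousLinearMap.comp_add, ContinuousLinearMap.add_comp]

theorem prodL2Conj_smul (s : ℂ) (X : (H₁ × H₂) →L[ℂ] (H₁ × H₂)) :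
    prodL2Conj (s • X) = s • prodL2Conj X := by
  unfold prodL2Conj
  rw [ContinuousLinearMap.comp_smul, ContinuousLinearMap.smul_comp]

theorem prodL2Conj_zero : prodL2Conj (0 : (H₁ × H₂) →L[ℂ] (H₁ × H₂)) = 0 := by
  unfold prodL2Conj
  rw [ContinuousLinearMap.comp_zero, ContinuousLinearMap.zero_comp]

theorem prodL2Conj_mul (X Y : (H₁ × H₂) →L[ℂ] (H₁ × H₂)) :
    prodL2Conj X * prodL2Conj Y = prodL2Conj (X.comp Y) := by
  ext x <;> simp [prodL2Conj, ContinuousLinearMap.mul_apply]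

/-- The representation `π_{(H₁,H₂,T)}` of `T2` on the Hilbert space direct sum `H₁ ⊕ H₂`
determined by a contraction `T : H₂ → H₁`: the upper triangular matrix `[[a, b], [0, c]]`
acts by `(ζ, η) ↦ (a ζ + b (T η), c η)`. -/
def triRep (T : H₂ →L[ℂ] H₁) :
    ↥T2 →ₙₐ[ℂ] (WithLp 2 (H₁ × H₂) →L[ℂ] WithLp 2 (H₁ × H₂)) where
  toFun M := prodL2Conj (blockOp T ((M : Matrix (Fin 2) (Fin 2) ℂ) 0 0)
    ((M : Matrix (Fin 2) (Fin 2) ℂ) 0 1) ((M : Matrix (Fin 2) (Fin 2) ℂ) 1 1))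
  map_add' M N := by
    have h : ((M + N : ↥T2) : Matrix (Fin 2) (Fin 2) ℂ)
        = (M : Matrix (Fin 2) (Fin 2) ℂ) + (N : Matrix (Fin 2) (Fin 2) ℂ) := rfl
    simp only [h, Matrix.add_apply, blockOp_add, prodL2Conj_add]
  map_smul' s M := by
    have h : ((s • M : ↥T2) : Matrix (Fin 2) (Fin 2) ℂ)
        = s • (M : Matrix (Fin 2) (Fin 2) ℂ) := rfl
    simp only [h, Matrix.smul_apply, smul_eq_mul, blockOp_smul, prodL2Conj_smul,
      RingHom.id_apply, MonoidHom.id_apply]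
  map_zero' := by
    have h : ((0 : ↥T2) : Matrix (Fin 2) (Fin 2) ℂ) = 0 := rfl
    simp only [h, Matrix.zero_apply, blockOp_zero, prodL2Conj_zero]
  map_mul' M N := by
    have hM : (M : Matrix (Fin 2) (Fin 2) ℂ) 1 0 = 0 := M.2
    have hN : (N : Matrix (Fin 2) (Fin 2) ℂ) 1 0 = 0 := N.2
    have hMN : ((M * N : ↥T2) : Matrix (Fin 2) (Fin 2) ℂ)
        = (M : Matrix (Fin 2) (Fin 2) ℂ) * (N : Matrix (Fin 2) (Fin 2) ℂ) := rfl
    have e00 : ((M * N : ↥T2) : Matrix (Fin 2) (Fin 2) ℂ) 0 0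
        = (M : Matrix (Fin 2) (Fin 2) ℂ) 0 0 * (N : Matrix (Fin 2) (Fin 2) ℂ) 0 0 := by
      simp [hMN, Matrix.mul_apply, Fin.sum_univ_two, hN]
    have e01 : ((M * N : ↥T2) : Matrix (Fin 2) (Fin 2) ℂ) 0 1
        = (M : Matrix (Fin 2) (Fin 2) ℂ) 0 0 * (N : Matrix (Fin 2) (Fin 2) ℂ) 0 1
          + (M : Matrix (Fin 2) (Fin 2) ℂ) 0 1 * (N : Matrix (Fin 2) (Fin 2) ℂ) 1 1 := by
      simp [hMN, Matrix.mul_apply, Fin.sum_univ_two]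
    have e11 : ((M * N : ↥T2) : Matrix (Fin 2) (Fin 2) ℂ) 1 1
        = (M : Matrix (Fin 2) (Fin 2) ℂ) 1 1 * (N : Matrix (Fin 2) (Fin 2) ℂ) 1 1 := by
      simp [hMN, Matrix.mul_apply, Fin.sum_univ_two, hM]
    simp only [e00, e01, e11, ← blockOp_mul, ← prodL2Conj_mul]


/-! ### Auxiliary material for the main theorem -/

def tE11 : ↥T2 := ⟨Matrix.single 0 0 1, by show _ = (0:ℂ); simp [Matrix.single]⟩
def tE12 : ↥T2 := ⟨Matrix.single 0 1 1, by show _ = (0:ℂ); simp [Matrix.single]⟩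
def tE22 : ↥T2 := ⟨Matrix.single 1 1 1, by show _ = (0:ℂ); simp [Matrix.single]⟩

@[simp] theorem tE11_00 : (tE11 : Matrix (Fin 2) (Fin 2) ℂ) 0 0 = 1 := by
  simp [tE11, Matrix.single]
@[simp] theorem tE11_01 : (tE11 : Matrix (Fin 2) (Fin 2) ℂ) 0 1 = 0 := by
  simp [tE11, Matrix.single]
@[simp] theorem tE11_11 : (tE11 : Matrix (Fin 2) (Fin 2) ℂ) 1 1 = 0 := by
  simp [tE11, Matrix.single]
@[simp] theorem tE12_00 : (tE12 : Matrix (Fin 2) (Fin 2) ℂ) 0 0 = 0 := by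
  simp [tE12, Matrix.single]
@[simp] theorem tE12_01 : (tE12 : Matrix (Fin 2) (Fin 2) ℂ) 0 1 = 1 := by
  simp [tE12, Matrix.single]
@[simp] theorem tE12_11 : (tE12 : Matrix (Fin 2) (Fin 2) ℂ) 1 1 = 0 := by
  simp [tE12, Matrix.single]

theorem t2_decomp (M : ↥T2) :
    M = (M : Matrix (Fin 2) (Fin 2) ℂ) 0 0 • tE11 + (M : Matrix (Fin 2) (Fin 2) ℂ) 0 1 • tE12
      + (M : Matrix (Fin 2) (Fin 2) ℂ) 1 1 • tE22 := by
  have h : (M : Matrix (Fin 2) (Fin 2) ℂ) 1 0 = 0 := M.2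
  apply Subtype.ext
  ext i j
  fin_cases i <;> fin_cases j <;>
    simp [tE11, tE12, tE22, Matrix.single, h]

theorem t2_mul_E11 (M : ↥T2) : M * tE11 = (M : Matrix (Fin 2) (Fin 2) ℂ) 0 0 • tE11 := by
  have h : (M : Matrix (Fin 2) (Fin 2) ℂ) 1 0 = 0 := M.2
  apply Subtype.ext
  ext i j
  fin_cases i <;> fin_cases j <;>
    simp [tE11, Matrix.mul_apply, Fin.sum_univ_two, Matrix.single, h]

theorem t2_mul_E22 (M : ↥T2) :
    M * tE22 = (M : Matrix (Fin 2) (Fin 2) ℂ) 0 1 • tE12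
      + (M : Matrix (Fin 2) (Fin 2) ℂ) 1 1 • tE22 := by
  apply Subtype.ext
  ext i j
  fin_cases i <;> fin_cases j <;>
    simp [tE12, tE22, Matrix.mul_apply, Fin.sum_univ_two, Matrix.single]

theorem t2_E11_mul_E12 : tE11 * tE12 = tE12 := by
  apply Subtype.ext
  ext i j
  fin_cases i <;> fin_cases j <;>
    simp [tE11, tE12, Matrix.mul_apply, Fin.sum_univ_two, Matrix.single]

theorem t2_entry_norm_le (M : ↥T2) (i j : Fin 2) :
    ‖(M : Matrix (Fin 2) (Fin 2) ℂ) i j‖ ≤ ‖M‖ := by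
  set B : Matrix (Fin 2) (Fin 2) ℂ := (M : Matrix (Fin 2) (Fin 2) ℂ)
  have hM : ‖M‖ = ‖B‖ := rfl
  rw [hM]
  set v : EuclideanSpace ℂ (Fin 2) :=
    (EuclideanSpace.equiv (Fin 2) ℂ).symm (B.mulVec (EuclideanSpace.single j 1))
  have hv : v i = B i j := by
    show (B.mulVec (EuclideanSpace.single j (1:ℂ))) i = B i j
    simp [Matrix.mulVec, dotProduct, Fin.sum_univ_two, EuclideanSpace.single_apply]
  have h1 : ‖B i j‖ ≤ ‖v‖ := by
    have := norm_inner_le_norm (𝕜 := ℂ) (EuclideanSpace.single i (1:ℂ)) v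
    rw [EuclideanSpace.inner_single_left, EuclideanSpace.norm_single] at this
    simpa [hv] using this
  have h2 : ‖v‖ ≤ ‖B‖ := by
    have := B.l2_opNorm_mulVec (EuclideanSpace.single j 1)
    rw [EuclideanSpace.norm_single, norm_one, mul_one] at this
    exact this
  exact h1.trans h2

variable (H₁ H₂) in
/-- Abbreviation for the `L²` product equivalence. -/
def eL : WithLp 2 (H₁ × H₂) ≃L[ℂ] H₁ × H₂ := WithLp.prodContinuousLinearEquiv 2 ℂ H₁ H₂

theorem triRep_apply' (T : H₂ →L[ℂ] H₁) (M : ↥T2) (x : WithLp 2 (H₁ × H₂)) :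
    triRep T M x = (eL H₁ H₂).symm
      (((M : Matrix (Fin 2) (Fin 2) ℂ) 0 0) • ((eL H₁ H₂) x).1
        + ((M : Matrix (Fin 2) (Fin 2) ℂ) 0 1) • T (((eL H₁ H₂) x).2),
       ((M : Matrix (Fin 2) (Fin 2) ℂ) 1 1) • (((eL H₁ H₂) x).2)) := rfl

variable (H₁) in
/-- The rank-one-type representation of `T2` on a single Hilbert space via the `(0,0)` entry. -/
def diagRep : ↥T2 →ₙₐ[ℂ] (H₁ →L[ℂ] H₁) where
  toFun M := ((M : Matrix (Fin 2) (Fin 2) ℂ) 0 0) • (1 : H₁ →L[ℂ] H₁)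
  map_add' M N := by
    have h : ((M + N : ↥T2) : Matrix (Fin 2) (Fin 2) ℂ) 0 0
        = (M : Matrix (Fin 2) (Fin 2) ℂ) 0 0 + (N : Matrix (Fin 2) (Fin 2) ℂ) 0 0 := rfl
    show ((M + N : ↥T2) : Matrix (Fin 2) (Fin 2) ℂ) 0 0 • (1 : H₁ →L[ℂ] H₁)
        = (M : Matrix (Fin 2) (Fin 2) ℂ) 0 0 • (1 : H₁ →L[ℂ] H₁)
          + (N : Matrix (Fin 2) (Fin 2) ℂ) 0 0 • (1 : H₁ →L[ℂ] H₁)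
    rw [h, add_smul]
  map_smul' s M := by
    have h : ((s • M : ↥T2) : Matrix (Fin 2) (Fin 2) ℂ) 0 0
        = s * (M : Matrix (Fin 2) (Fin 2) ℂ) 0 0 := rfl
    show ((s • M : ↥T2) : Matrix (Fin 2) (Fin 2) ℂ) 0 0 • (1 : H₁ →L[ℂ] H₁)
        = (MonoidHom.id ℂ) s • ((M : Matrix (Fin 2) (Fin 2) ℂ) 0 0 • (1 : H₁ →L[ℂ] H₁))
    rw [h, mul_smul]
    rfl
  map_zero' := by
    have h : ((0 : ↥T2) : Matrix (Fin 2) (Fin 2) ℂ) 0 0 = 0 := rfl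
    show ((0 : ↥T2) : Matrix (Fin 2) (Fin 2) ℂ) 0 0 • (1 : H₁ →L[ℂ] H₁) = 0
    rw [h, zero_smul]
  map_mul' M N := by
    have hN : (N : Matrix (Fin 2) (Fin 2) ℂ) 1 0 = 0 := N.2
    have h : ((M * N : ↥T2) : Matrix (Fin 2) (Fin 2) ℂ) 0 0
        = (M : Matrix (Fin 2) (Fin 2) ℂ) 0 0 * (N : Matrix (Fin 2) (Fin 2) ℂ) 0 0 := by
      show ((M : Matrix (Fin 2) (Fin 2) ℂ) * (N : Matrix (Fin 2) (Fin 2) ℂ)) 0 0 = _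
      simp [Matrix.mul_apply, Fin.sum_univ_two, hN]
    show ((M * N : ↥T2) : Matrix (Fin 2) (Fin 2) ℂ) 0 0 • (1 : H₁ →L[ℂ] H₁)
        = ((M : Matrix (Fin 2) (Fin 2) ℂ) 0 0 • (1 : H₁ →L[ℂ] H₁))
          * ((N : Matrix (Fin 2) (Fin 2) ℂ) 0 0 • (1 : H₁ →L[ℂ] H₁))
    rw [h]
    ext x
    simp only [ContinuousLinearMap.smul_apply, ContinuousLinearMap.mul_apply,
      ContinuousLinearMap.one_apply, mul_smul]

/-- The Hilbert `T2`-module `H₁ ⊕ H₂` given by `π_(H₁,H₂,T)` is a semigenerator if and only if the range of `T` is not dense in `H₁`. -/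
theorem triRep_semigenerator_iff [CompleteSpace H₁] [CompleteSpace H₂]
    [Nontrivial H₁] [Nontrivial H₂]
    (T : H₂ →L[ℂ] H₁) (hT : ‖T‖ ≤ 1) :
    IsSemigenerator ↥T2 (triRep T) ↔ ¬Dense (Set.range ⇑T : Set H₁) := by
  constructor
  · -- semigenerator implies range not dense
    intro hsg hdense
    have hrep : IsHilbertRep ↥T2 (diagRep H₁) := by
      constructor
      · intro M
        have h : ‖diagRep H₁ M‖ = ‖(M : Matrix (Fin 2) (Fin 2) ℂ) 0 0‖ := by
          show ‖((M : Matrix (Fin 2) (Fin 2) ℂ) 0 0) • (1 : H₁ →L[ℂ] H₁)‖ = _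
          rw [norm_smul, norm_one, mul_one]
        rw [h]
        exact t2_entry_norm_le M 0 0
      · have hset : {x : H₁ | ∃ a y, diagRep H₁ a y = x} = Set.univ := by
          refine Set.eq_univ_of_forall fun x => ⟨tE11, x, ?_⟩
          show ((tE11 : Matrix (Fin 2) (Fin 2) ℂ) 0 0) • x = x
          simp
        rw [hset, Submodule.span_univ]
        simp [dense_univ]
    obtain ⟨V, hVmod, hV0⟩ := hsg H₁ (diagRep H₁) hrep inferInstance
    apply hV0
    have h12 : ∀ η : H₂, V ((eL H₁ H₂).symm (T η, 0)) = 0 := by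
      intro η
      have h := hVmod tE12 ((eL H₁ H₂).symm (0, η))
      rw [triRep_apply'] at h
      simp only [tE12_00, tE12_01, tE12_11, zero_smul, one_smul, zero_add,
        ContinuousLinearEquiv.apply_symm_apply] at h
      rw [h]
      show ((tE12 : Matrix (Fin 2) (Fin 2) ℂ) 0 0) • _ = (0 : H₁)
      simp
    have h11 : ∀ x, V x = V ((eL H₁ H₂).symm (((eL H₁ H₂) x).1, 0)) := by
      intro x
      have h := hVmod tE11 x
      rw [triRep_apply'] at h
      simp only [tE11_00, tE11_01, tE11_11, one_smul, zero_smul, add_zero] at h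
      have h' : (diagRep H₁) tE11 (V x) = V x := by
        show ((tE11 : Matrix (Fin 2) (Fin 2) ℂ) 0 0) • V x = V x
        simp
      rw [h, h']
    have hz : ∀ ζ : H₁, V ((eL H₁ H₂).symm (ζ, 0)) = 0 := by
      have hc : Continuous fun ζ : H₁ => V ((eL H₁ H₂).symm (ζ, 0)) :=
        V.continuous.comp ((eL H₁ H₂).symm.continuous.comp
          (continuous_id.prodMk continuous_const))
      have heq : (fun ζ : H₁ => V ((eL H₁ H₂).symm (ζ, 0))) = fun _ => (0 : H₁) := by
        refine Continuous.ext_on hdense hc continuous_const ?_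
        rintro ζ ⟨η, rfl⟩
        exact h12 η
      intro ζ
      exact congrFun heq ζ
    ext x
    rw [ContinuousLinearMap.zero_apply, h11 x, hz]
  · -- range not dense implies semigenerator
    intro hnd K _ _ _ πK hπK hK
    by_cases h1 : πK tE11 = 0
    · have hS : πK tE12 = 0 := by
        rw [← t2_E11_mul_E12, map_mul, h1, zero_mul]
      by_cases h2 : πK tE22 = 0
      · exfalso
        have hall : ∀ a : ↥T2, πK a = 0 := by
          intro a
          rw [t2_decomp a]
          simp [h1, h2, hS]
        obtain ⟨x, hx⟩ := exists_ne (0 : K)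
        have hsp : Submodule.span ℂ {x : K | ∃ a y, πK a y = x} = ⊥ := by
          rw [eq_bot_iff]
          refine Submodule.span_le.2 ?_
          rintro z ⟨a, y, rfl⟩
          simp [hall]
        have hd := hπK.2
        rw [hsp] at hd
        have hcl := hd.closure_eq
        rw [Submodule.bot_coe, closure_singleton] at hcl
        apply hx
        rw [← Set.mem_singleton_iff, hcl]
        trivial
      · -- πK tE11 = 0, πK tE22 ≠ 0
        obtain ⟨k, hk⟩ : ∃ k : K, πK tE22 k ≠ 0 := by
          by_contra h
          push_neg at h
          exact h2 (ContinuousLinearMap.ext fun y => by simp [h y])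
        obtain ⟨η₀, hη₀⟩ := exists_ne (0 : H₂)
        refine ⟨((innerSL ℂ η₀).comp ((ContinuousLinearMap.snd ℂ H₁ H₂).comp
            (eL H₁ H₂).toContinuousLinearMap)).smulRight (πK tE22 k), ?_, ?_⟩
        · intro M x
          have hMk : πK M (πK tE22 k) = (M : Matrix (Fin 2) (Fin 2) ℂ) 1 1 • πK tE22 k := by
            have h : πK M (πK tE22 k) = (πK M * πK tE22) k := rfl
            rw [h, ← map_mul, t2_mul_E22, map_add, map_smul, map_smul, hS]
            simp
          simp only [ContinuousLinearMap.smulRight_apply, ContinuousLinearMap.comp_apply,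
            ContinuousLinearEquiv.coe_coe, ContinuousLinearMap.coe_snd',
            triRep_apply', ContinuousLinearEquiv.apply_symm_apply, innerSL_apply_apply,
            ContinuousLinearMap.map_smul, hMk, inner_smul_right]
          simp only [smul_smul, smul_eq_mul, mul_comm]
        · intro h0
          have h := ContinuousLinearMap.ext_iff.1 h0 ((eL H₁ H₂).symm (0, η₀))
          simp only [ContinuousLinearMap.smulRight_apply, ContinuousLinearMap.comp_apply,
            ContinuousLinearEquiv.coe_coe, ContinuousLinearMap.coe_snd',
            ContinuousLinearEquiv.apply_symm_apply, innerSL_apply_apply,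
            ContinuousLinearMap.zero_apply, smul_eq_zero] at h
          rcases h with h | h
          · exact hη₀ (inner_self_eq_zero.1 h)
          · exact hk h
    · -- πK tE11 ≠ 0
      obtain ⟨k, hk⟩ : ∃ k : K, πK tE11 k ≠ 0 := by
        by_contra h
        push_neg at h
        exact h1 (ContinuousLinearMap.ext fun y => by simp [h y])
      have hO : ((LinearMap.range (T : H₂ →ₗ[ℂ] H₁) : Submodule ℂ H₁))ᗮ ≠ ⊥ := by
        intro hbot
        apply hnd
        have h2 : ((LinearMap.range (T : H₂ →ₗ[ℂ] H₁) : Submodule ℂ H₁))ᗮᗮ = ⊤ := by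
          rw [hbot, Submodule.bot_orthogonal_eq_top]
        rw [Submodule.orthogonal_orthogonal_eq_closure] at h2
        have hd := Submodule.dense_iff_topologicalClosure_eq_top.2 h2
        simpa [LinearMap.coe_range] using hd
      obtain ⟨ζ₀, hζmem, hζ0⟩ := (Submodule.ne_bot_iff _).1 hO
      have horth : ∀ η : H₂, (inner ℂ ζ₀ (T η) : ℂ) = 0 := by
        intro η
        have h := (Submodule.mem_orthogonal _ _).1 hζmem (T η) (LinearMap.mem_range_self _ η)
        rw [← inner_conj_symm, h, map_zero]
      refine ⟨((innerSL ℂ ζ₀).comp ((ContinuousLinearMap.fst ℂ H₁ H₂).comp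
          (eL H₁ H₂).toContinuousLinearMap)).smulRight (πK tE11 k), ?_, ?_⟩
      · intro M x
        have hMk : πK M (πK tE11 k) = (M : Matrix (Fin 2) (Fin 2) ℂ) 0 0 • πK tE11 k := by
          have h : πK M (πK tE11 k) = (πK M * πK tE11) k := rfl
          rw [h, ← map_mul, t2_mul_E11, map_smul]
          rfl
        simp only [ContinuousLinearMap.smulRight_apply, ContinuousLinearMap.comp_apply,
          ContinuousLinearEquiv.coe_coe, ContinuousLinearMap.coe_fst',
          triRep_apply', ContinuousLinearEquiv.apply_symm_apply, innerSL_apply_apply,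
          ContinuousLinearMap.map_smul, hMk, inner_add_right, inner_smul_right, horth,
          mul_zero, add_zero]
        simp only [smul_smul, smul_eq_mul, mul_comm]
      · intro h0
        have h := ContinuousLinearMap.ext_iff.1 h0 ((eL H₁ H₂).symm (ζ₀, 0))
        simp only [ContinuousLinearMap.smulRight_apply, ContinuousLinearMap.comp_apply,
          ContinuousLinearEquiv.coe_coe, ContinuousLinearMap.coe_fst',
          ContinuousLinearEquiv.apply_symm_apply, innerSL_apply_apply,
          ContinuousLinearMap.zero_apply, smul_eq_zero] at h
        rcases h with h | h
        · exact hζ0 (inner_self_eq_zero.1 h)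
        · exact hk h
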